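/- arXiv:1410.0641 — 2 statements merged into one kernel-verified Lean document; each statement's English description precedes it below -/
import Mathlib

section
/- In the setting of Problem 1, choose μ > 0, α̲ > 0 and β ≥ 0 satisfying μ(σ − L_{∇g}α̲) > β(μ² + 1), define M_1 = (σ − ᾱL_{∇g})/(2ᾱ) − μβ/(2α̲) and M_2 = β/(2μα̲), and choose ᾱ > α̲ such that M_1 > M_2. Assume f + g is bounded from below, and let (x_n)_{n∈ℕ} be a sequence generated by Algorithm 1. Then the sequence ((f+g)(x_n) + M_2‖x_{n−1} − x_n‖²)_{n≥1} is monotonically decreasing and convergent, and the sequence ((f+g)(x_n))_{n∈ℕ} is convergent. -/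
set_option maxHeartbeats 1000000
open Filter Topology RealInnerProductSpace Set

noncomputable section
variable {E : Type*} [NormedAddCommGroup E] [InnerProductSpace ℝ E] [CompleteSpace E]

lemma myInner_gradient (h : E → ℝ) (x v : E) : ⟪gradient h x, v⟫ = fderiv ℝ h x v := by
  show ⟪(InnerProductSpace.toDual ℝ E).symm (fderiv ℝ h x), v⟫ = _
  exact InnerProductSpace.toDual_symm_apply

lemma myHasDerivAt_line (h : E → ℝ) (hd : Differentiable ℝ h) (x d : E) (t : ℝ) :
    HasDerivAt (fun s : ℝ => h (x + s • d)) (fderiv ℝ h (x + t • d) d) t := by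
  have hline : HasDerivAt (fun s : ℝ => x + s • d) d t := by
    simpa using ((hasDerivAt_id t).smul_const d).const_add x
  exact ((hd (x + t • d)).hasFDerivAt.comp_hasDerivAt t hline)

lemma myConvex_fderiv_le (h : E → ℝ) (hc : ConvexOn ℝ Set.univ h) (hd : Differentiable ℝ h)
    (x y : E) : h x + fderiv ℝ h x (y - x) ≤ h y := by
  set d := y - x with hdd
  have hder : HasDerivAt (fun s : ℝ => h (x + s • d)) (fderiv ℝ h x d) 0 := by
    simpa using myHasDerivAt_line h hd x d 0
  have hslope := hasDerivAt_iff_tendsto_slope.mp hder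
  have h2 : Tendsto (slope (fun s : ℝ => h (x + s • d)) 0) (𝓝[>] 0)
      (𝓝 (fderiv ℝ h x d)) :=
    hslope.mono_left (nhdsWithin_mono 0 (fun t ht => ne_of_gt ht))
  have hev : ∀ᶠ t in 𝓝[>] (0:ℝ), slope (fun s : ℝ => h (x + s • d)) 0 t ≤ h y - h x := by
    filter_upwards [Ioc_mem_nhdsGT_of_mem (by norm_num : (0:ℝ) ∈ Set.Ico (0:ℝ) 1)] with t ht
    have h0t : (0:ℝ) < t := ht.1
    have ht1 : t ≤ 1 := ht.2
    have hconv := hc.2 (Set.mem_univ x) (Set.mem_univ y)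
      (by linarith : (0:ℝ) ≤ 1 - t) h0t.le (by ring)
    have hxx : (1-t) • x + t • y = x + t • d := by
      rw [hdd]; module
    rw [hxx] at hconv
    rw [slope_def_field]
    have : h (x + (0:ℝ) • d) = h x := by norm_num
    rw [this, sub_zero, div_le_iff₀ h0t]
    simp only [smul_eq_mul] at hconv
    nlinarith
  have := le_of_tendsto h2 hev
  linarith

lemma myStrong_lb (F : E → ℝ) (σ : ℝ)
    (hFconv : ConvexOn ℝ Set.univ fun z => F z - σ / 2 * ‖z‖ ^ 2)
    (hFdiff : Differentiable ℝ F) (u v : E) :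
    σ / 2 * ‖u - v‖ ^ 2 ≤ F u - F v - ⟪gradient F v, u - v⟫ := by
  have hfun : (fun z : E => F z - σ / 2 * ‖z‖ ^ 2)
      = fun z : E => F z - σ / 2 * ⟪z, z⟫ := by
    funext z; rw [real_inner_self_eq_norm_sq]
  rw [hfun] at hFconv
  have hdq : Differentiable ℝ (fun z : E => ⟪z, z⟫) :=
    differentiable_id.inner ℝ differentiable_id
  have hd : Differentiable ℝ (fun z : E => F z - σ / 2 * ⟪z, z⟫) :=
    hFdiff.sub (hdq.const_mul _)
  have key := myConvex_fderiv_le _ hFconv hd v u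
  have hfd : fderiv ℝ (fun z : E => F z - σ / 2 * ⟪z, z⟫) v (u - v)
      = fderiv ℝ F v (u - v) - σ / 2 * (⟪v, u - v⟫ + ⟪u - v, v⟫) := by
    rw [fderiv_fun_sub (hFdiff v) ((hdq v).const_mul _)]
    simp only [ContinuousLinearMap.coe_sub', Pi.sub_apply]
    congr 1
    rw [fderiv_const_mul (hdq v)]
    simp only [ContinuousLinearMap.coe_smul', Pi.smul_apply, smul_eq_mul]
    congr 1
    rw [fderiv_inner_apply ℝ differentiableAt_fun_id differentiableAt_fun_id]
    simp
  rw [hfd] at key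
  have hg : ⟪gradient F v, u - v⟫ = fderiv ℝ F v (u - v) := myInner_gradient F v (u - v)
  have e1 : ⟪u - v, u - v⟫ = ⟪u, u⟫ - 2 * ⟪u, v⟫ + ⟪v, v⟫ := by
    simp [inner_sub_left, inner_sub_right, real_inner_comm u v]; rw [norm_sub_sq_real]
  have e2 : ⟪v, u - v⟫ = ⟪v, u⟫ - ⟪v, v⟫ := inner_sub_right v u v
  have e3 : ⟪u - v, v⟫ = ⟪u, v⟫ - ⟪v, v⟫ := inner_sub_left u v v
  have e4 : ‖u - v‖ ^ 2 = ⟪u - v, u - v⟫ := (real_inner_self_eq_norm_sq _).symm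
  have e5 : ⟪v, u⟫ = ⟪u, v⟫ := real_inner_comm u v
  rw [hg, e4, e1]
  rw [e2, e3, e5] at key
  linarith [key]

lemma myDescent (g : E → ℝ) (Lg : ℝ) (hgdiff : Differentiable ℝ g)
    (hglip : ∀ z w, ‖gradient g z - gradient g w‖ ≤ Lg * ‖z - w‖) (x y : E) :
    g y ≤ g x + ⟪gradient g x, y - x⟫ + Lg / 2 * ‖y - x‖ ^ 2 := by
  set d := y - x with hdd
  set c := fderiv ℝ g x d with hcc
  set q := ‖d‖ ^ 2 with hqq
  set ψ := fun t : ℝ => g (x + t • d) - t * c - Lg / 2 * t ^ 2 * q with hψ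
  have hψd : ∀ t : ℝ, HasDerivAt ψ (fderiv ℝ g (x + t • d) d - c - Lg * t * q) t := by
    intro t
    have h1 := myHasDerivAt_line g hgdiff x d t
    have h2 : HasDerivAt (fun t : ℝ => t * c) c t := by
      simpa using (hasDerivAt_id t).mul_const c
    have h3 : HasDerivAt (fun t : ℝ => Lg / 2 * t ^ 2 * q) (Lg * t * q) t := by
      have := ((hasDerivAt_pow 2 t).const_mul (Lg / 2)).mul_const q
      exact this.congr_deriv (by push_cast; ring)
    exact (h1.sub h2).sub h3
  have hψdiff : Differentiable ℝ ψ := fun t => (hψd t).differentiableAt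
  have hmono : AntitoneOn ψ (Set.Icc 0 1) := by
    apply antitoneOn_of_deriv_nonpos (convex_Icc 0 1) hψdiff.continuous.continuousOn
      (fun t _ => (hψdiff t).differentiableWithinAt)
    intro t ht
    rw [interior_Icc] at ht
    rw [(hψd t).deriv]
    have hin : fderiv ℝ g (x + t • d) d - c
        = ⟪gradient g (x + t • d) - gradient g x, d⟫ := by
      rw [inner_sub_left, myInner_gradient, myInner_gradient, hcc]
    have hb : ⟪gradient g (x + t • d) - gradient g x, d⟫ ≤ Lg * t * q := by
      calc ⟪gradient g (x + t • d) - gradient g x, d⟫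
          ≤ ‖gradient g (x + t • d) - gradient g x‖ * ‖d‖ := real_inner_le_norm _ _
        _ ≤ (Lg * ‖x + t • d - x‖) * ‖d‖ :=
            mul_le_mul_of_nonneg_right (hglip _ _) (norm_nonneg _)
        _ = Lg * t * q := by
            rw [add_sub_cancel_left, norm_smul, Real.norm_eq_abs, abs_of_pos ht.1, hqq]
            ring
    rw [hin] at *
    linarith
  have h01 := hmono (Set.left_mem_Icc.mpr zero_le_one) (Set.right_mem_Icc.mpr zero_le_one)
    zero_le_one
  have e0 : ψ 0 = g x := by simp [hψ]
  have e1 : ψ 1 = g y - c - Lg / 2 * q := by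
    simp [hψ, hdd]
  rw [e0, e1] at h01
  have : ⟪gradient g x, y - x⟫ = c := myInner_gradient g x d
  rw [this]
  linarith

end

noncomputable section
variable {E : Type*} [NormedAddCommGroup E] [InnerProductSpace ℝ E]
def frechetSubdiff (h : E → EReal) (x : E) : Set E :=
  {v | h x ≠ ⊤ ∧ ∀ ε : ℝ, 0 < ε →
    ∀ᶠ y in 𝓝 x, (((h x).toReal + ⟪v, y - x⟫ - ε * ‖y - x‖ : ℝ) : EReal) ≤ h y}

/-- The limiting (Mordukhovich) subdifferential of `h` at `x`. -/
def limitingSubdiff (h : E → EReal) (x : E) : Set E :=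
  {v | h x ≠ ⊤ ∧ ∃ xk vk : ℕ → E,
    Tendsto xk atTop (𝓝 x) ∧
    Tendsto (fun k => h (xk k)) atTop (𝓝 (h x)) ∧
    (∀ k, vk k ∈ frechetSubdiff h (xk k)) ∧
    Tendsto vk atTop (𝓝 v)}

/-- Proposition 3.2(b),(c): the sequence `(f+g)(x n) + M2‖x (n-1) - x n‖²` is
monotonically decreasing (from `n = 1` on) and convergent, and `((f+g)(x n))` is
convergent. -/
theorem stmt7
    (m : ℕ)
    (f : EuclideanSpace ℝ (Fin m) → EReal)
    -- `f` is proper (never `⊥`, somewhere finite), lower semicontinuous and bounded below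
    (hfbot : ∀ z, f z ≠ ⊥) (hfproper : ∃ z, f z ≠ ⊤)
    (hflsc : LowerSemicontinuous f)
    (hfbdd : ∃ cl : ℝ, ∀ z, (cl : EReal) ≤ f z)
    -- `g` is differentiable with `Lg`-Lipschitz gradient
    (g : EuclideanSpace ℝ (Fin m) → ℝ) (Lg : ℝ) (hLg : 0 ≤ Lg)
    (hgdiff : Differentiable ℝ g)
    (hglip : ∀ z w, ‖gradient g z - gradient g w‖ ≤ Lg * ‖z - w‖)
    -- `F` is `σ`-strongly convex and differentiable with `LF`-Lipschitz gradient
    (F : EuclideanSpace ℝ (Fin m) → ℝ) (σ LF : ℝ) (hσ : 0 < σ) (hLF : 0 < LF)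
    (hFconv : ConvexOn ℝ Set.univ fun z => F z - σ / 2 * ‖z‖ ^ 2)
    (hFdiff : Differentiable ℝ F)
    (hFlip : ∀ z w, ‖gradient F z - gradient F w‖ ≤ LF * ‖z - w‖)
    -- parameters of the algorithm
    (αlo αhi β : ℝ) (hαlo : 0 < αlo) (hαorder : αlo ≤ αhi) (hβ : 0 ≤ β)
    (α βs : ℕ → ℝ)
    (hα : ∀ n, 1 ≤ n → αlo ≤ α n ∧ α n ≤ αhi)
    (hβs : ∀ n, 1 ≤ n → 0 ≤ βs n ∧ βs n ≤ β)
    -- the sequence generated by Algorithm 1: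
    -- `x (n+1)` minimizes `u ↦ D_F(u, x n) + α n • ⟪u, ∇g(x n)⟫ + βs n • ⟪u, x (n-1) - x n⟫ + α n • f u`
    (x : ℕ → EuclideanSpace ℝ (Fin m))
    (halg : ∀ n, 1 ≤ n → ∀ u,
      ((F (x (n + 1)) - F (x n) - ⟪gradient F (x n), x (n + 1) - x n⟫
          + α n * ⟪x (n + 1), gradient g (x n)⟫
          + βs n * ⟪x (n + 1), x (n - 1) - x n⟫ : ℝ) : EReal)
        + (α n : EReal) * f (x (n + 1))
      ≤ ((F u - F (x n) - ⟪gradient F (x n), u - x n⟫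
          + α n * ⟪u, gradient g (x n)⟫
          + βs n * ⟪u, x (n - 1) - x n⟫ : ℝ) : EReal)
        + (α n : EReal) * f u)
    -- the parameters `μ, αlo, β` satisfy `μ(σ - Lg·αlo) > β(μ² + 1)` and `αhi` is chosen
    -- with `αlo < αhi` such that `M1 > M2`
    (μ : ℝ) (hμ : 0 < μ)
    (hcond : β * (μ ^ 2 + 1) < μ * (σ - Lg * αlo))
    (M1 M2 : ℝ)
    (hM1 : M1 = (σ - αhi * Lg) / (2 * αhi) - μ * β / (2 * αlo))
    (hM2 : M2 = β / (2 * μ * αlo))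
    (hαstrict : αlo < αhi) (hM : M2 < M1)

    -- `f + g` is bounded from below
    (hfgbdd : ∃ c : ℝ, ∀ z, (c : EReal) ≤ f z + ((g z : ℝ) : EReal))
    :
    (∀ n, 1 ≤ n →
      f (x (n + 1)) + ((g (x (n + 1)) + M2 * ‖x n - x (n + 1)‖ ^ 2 : ℝ) : EReal)
        ≤ f (x n) + ((g (x n) + M2 * ‖x (n - 1) - x n‖ ^ 2 : ℝ) : EReal)) ∧
    (∃ l : ℝ, Tendsto
      (fun n => f (x n) + ((g (x n) + M2 * ‖x (n - 1) - x n‖ ^ 2 : ℝ) : EReal))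
      atTop (𝓝 (l : EReal))) ∧
    (∃ l : ℝ, Tendsto (fun n => f (x n) + ((g (x n) : ℝ) : EReal)) atTop (𝓝 (l : EReal))) := by

  classical
  obtain ⟨z0, hz0⟩ := hfproper
  obtain ⟨c, hc⟩ := hfgbdd
  have hαhipos : 0 < αhi := lt_of_lt_of_le hαlo hαorder
  have hM2n : 0 ≤ M2 := by rw [hM2]; positivity
  have hM12 : 0 < M1 - M2 := by linarith
  -- finiteness of f along the iterates
  have hfin : ∀ k, 1 ≤ k → f (x (k + 1)) ≠ ⊤ := by
    intro k hk hT
    have h := halg k hk z0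
    have hαk : 0 < α k := lt_of_lt_of_le hαlo (hα k hk).1
    rw [hT, EReal.coe_mul_top_of_pos hαk, EReal.coe_add_top] at h
    rw [← EReal.coe_toReal hz0 (hfbot z0), ← EReal.coe_mul, ← EReal.coe_add] at h
    exact not_le_of_gt (EReal.coe_lt_top _) h
  have hfin2 : ∀ n, 2 ≤ n → f (x n) ≠ ⊤ := by
    intro n hn
    have := hfin (n - 1) (by omega)
    rwa [Nat.sub_add_cancel (by omega)] at this
  -- the key real inequality
  have key : ∀ n, 1 ≤ n → f (x n) ≠ ⊤ →
      (f (x (n + 1))).toReal + (g (x (n + 1)) + M2 * ‖x n - x (n + 1)‖ ^ 2)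
          + (M1 - M2) * ‖x n - x (n + 1)‖ ^ 2
        ≤ (f (x n)).toReal + (g (x n) + M2 * ‖x (n - 1) - x n‖ ^ 2) := by
    intro n hn hnT
    have hn1T := hfin n hn
    have hαn : αlo ≤ α n := (hα n hn).1
    have hαn' : α n ≤ αhi := (hα n hn).2
    have hαpos : 0 < α n := lt_of_lt_of_le hαlo hαn
    have hβn := hβs n hn
    have h := halg n hn (x n)
    rw [← EReal.coe_toReal hnT (hfbot _), ← EReal.coe_toReal hn1T (hfbot _)] at h
    set Δ := x (n + 1) - x n with hΔ
    set dn := x (n - 1) - x n with hdn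
    set G := gradient g (x n) with hG
    set fn := (f (x n)).toReal
    set fn1 := (f (x (n + 1))).toReal
    have h1 : F (x (n + 1)) - F (x n) - ⟪gradient F (x n), Δ⟫ + α n * ⟪x (n + 1), G⟫
        + βs n * ⟪x (n + 1), dn⟫ + α n * fn1
        ≤ F (x n) - F (x n) - ⟪gradient F (x n), x n - x n⟫ + α n * ⟪x n, G⟫
        + βs n * ⟪x n, dn⟫ + α n * fn := by exact_mod_cast h
    have hz : F (x n) - F (x n) - ⟪gradient F (x n), x n - x n⟫ = 0 := by simp
    have hti : ⟪x (n + 1), G⟫ = ⟪x n, G⟫ + ⟪G, Δ⟫ := by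
      have h' : ⟪Δ, G⟫ = ⟪x (n + 1), G⟫ - ⟪x n, G⟫ := inner_sub_left _ _ _
      have h'' : ⟪Δ, G⟫ = ⟪G, Δ⟫ := real_inner_comm _ _
      linarith
    have hti2 : ⟪x (n + 1), dn⟫ = ⟪x n, dn⟫ + ⟪Δ, dn⟫ := by
      have h' : ⟪Δ, dn⟫ = ⟪x (n + 1), dn⟫ - ⟪x n, dn⟫ := inner_sub_left _ _ _
      linarith
    rw [hti, hti2, hz] at h1
    have h2 : σ / 2 * ‖Δ‖ ^ 2 ≤ F (x (n + 1)) - F (x n) - ⟪gradient F (x n), Δ⟫ :=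
      myStrong_lb F σ hFconv hFdiff (x (n + 1)) (x n)
    have h3 : g (x (n + 1)) ≤ g (x n) + ⟪G, Δ⟫ + Lg / 2 * ‖Δ‖ ^ 2 :=
      myDescent g Lg hgdiff hglip (x n) (x (n + 1))
    have h3' : α n * g (x (n + 1)) ≤ α n * (g (x n) + ⟪G, Δ⟫ + Lg / 2 * ‖Δ‖ ^ 2) :=
      mul_le_mul_of_nonneg_left h3 hαpos.le
    -- Cauchy-Schwarz / Young bound on the inertial term
    have hcs : -(‖Δ‖ * ‖dn‖) ≤ ⟪Δ, dn⟫ := (abs_le.mp (abs_real_inner_le_norm Δ dn)).1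
    have h40 : -(β * (‖Δ‖ * ‖dn‖)) ≤ βs n * ⟪Δ, dn⟫ := by
      have p1 : 0 ≤ βs n * (⟪Δ, dn⟫ + ‖Δ‖ * ‖dn‖) := mul_nonneg hβn.1 (by linarith)
      have p2 : 0 ≤ (β - βs n) * (‖Δ‖ * ‖dn‖) :=
        mul_nonneg (by linarith [hβn.2]) (mul_nonneg (norm_nonneg _) (norm_nonneg _))
      nlinarith [p1, p2]
    have h41 : β * (‖Δ‖ * ‖dn‖) ≤ β * (μ / 2) * ‖Δ‖ ^ 2 + β / (2 * μ) * ‖dn‖ ^ 2 := by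
      rw [show β * (μ / 2) * ‖Δ‖ ^ 2 = β / (2 * μ) * (μ ^ 2 * ‖Δ‖ ^ 2) by
        field_simp,
        show β * (‖Δ‖ * ‖dn‖) = β / (2 * μ) * (2 * μ * (‖Δ‖ * ‖dn‖)) by
        field_simp, ← mul_add]
      apply mul_le_mul_of_nonneg_left ?_ (by positivity)
      nlinarith [sq_nonneg (μ * ‖Δ‖ - ‖dn‖)]
    have h4 : -(β * (μ / 2) * ‖Δ‖ ^ 2 + β / (2 * μ) * ‖dn‖ ^ 2) ≤ βs n * ⟪Δ, dn⟫ := by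
      linarith
    have h5 : α n * (fn1 + g (x (n + 1))) ≤ α n * (fn + g (x n)) - σ / 2 * ‖Δ‖ ^ 2
        + α n * (Lg / 2) * ‖Δ‖ ^ 2 + β * (μ / 2) * ‖Δ‖ ^ 2 + β / (2 * μ) * ‖dn‖ ^ 2 := by
      nlinarith [h1, h2, h3', h4]
    -- constants
    set a1 := σ / (2 * αhi) with ha1d
    set a2 := μ * β / (2 * αlo) with ha2d
    have ha1 : αhi * a1 = σ / 2 := by rw [ha1d]; field_simp
    have ha2 : αlo * a2 = β * (μ / 2) := by rw [ha2d]; field_simp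
    have ha3 : αlo * M2 = β / (2 * μ) := by rw [hM2]; field_simp
    have hM1e : M1 = a1 - Lg / 2 - a2 := by
      rw [hM1, ha1d, ha2d]; field_simp
    have hr1 : α n * a1 ≤ σ / 2 := by
      rw [← ha1]; exact mul_le_mul_of_nonneg_right hαn' (by positivity)
    have hr2 : β * (μ / 2) ≤ α n * a2 := by
      rw [← ha2]; exact mul_le_mul_of_nonneg_right hαn (by positivity)
    have hr3 : β / (2 * μ) ≤ α n * M2 := by
      rw [← ha3]; exact mul_le_mul_of_nonneg_right hαn hM2n
    have q1 : α n * a1 * ‖Δ‖ ^ 2 ≤ σ / 2 * ‖Δ‖ ^ 2 :=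
      mul_le_mul_of_nonneg_right hr1 (sq_nonneg _)
    have q2 : β * (μ / 2) * ‖Δ‖ ^ 2 ≤ α n * a2 * ‖Δ‖ ^ 2 :=
      mul_le_mul_of_nonneg_right hr2 (sq_nonneg _)
    have q3 : β / (2 * μ) * ‖dn‖ ^ 2 ≤ α n * M2 * ‖dn‖ ^ 2 :=
      mul_le_mul_of_nonneg_right hr3 (sq_nonneg _)
    have hrev : ‖x n - x (n + 1)‖ = ‖Δ‖ := by rw [hΔ, norm_sub_rev]
    rw [hrev]
    have hmul : α n * (fn1 + (g (x (n + 1)) + M2 * ‖Δ‖ ^ 2) + (M1 - M2) * ‖Δ‖ ^ 2)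
        ≤ α n * (fn + (g (x n) + M2 * ‖dn‖ ^ 2)) := by
      rw [hM1e]; nlinarith [h5, q1, q2, q3]
    exact le_of_mul_le_mul_left hmul hαpos
  -- part (a): monotone decrease
  have hmono : ∀ n, 1 ≤ n →
      f (x (n + 1)) + ((g (x (n + 1)) + M2 * ‖x n - x (n + 1)‖ ^ 2 : ℝ) : EReal)
        ≤ f (x n) + ((g (x n) + M2 * ‖x (n - 1) - x n‖ ^ 2 : ℝ) : EReal) := by
    intro n hn
    by_cases hT : f (x n) = ⊤
    · rw [hT, EReal.top_add_coe]; exact le_top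
    · have k := key n hn hT
      have h1T := hfin n hn
      rw [← EReal.coe_toReal hT (hfbot _), ← EReal.coe_toReal h1T (hfbot _)]
      have : (f (x (n + 1))).toReal + (g (x (n + 1)) + M2 * ‖x n - x (n + 1)‖ ^ 2)
          ≤ (f (x n)).toReal + (g (x n) + M2 * ‖x (n - 1) - x n‖ ^ 2) := by
        nlinarith [mul_nonneg hM12.le (sq_nonneg ‖x n - x (n + 1)‖)]
      exact_mod_cast this
  -- the real-valued energy
  set e : ℕ → ℝ := fun n => (f (x n)).toReal + (g (x n) + M2 * ‖x (n - 1) - x n‖ ^ 2)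
    with he
  have hdec : ∀ n, 2 ≤ n → e (n + 1) + (M1 - M2) * ‖x n - x (n + 1)‖ ^ 2 ≤ e n := by
    intro n hn
    have k := key n (by omega) (hfin2 n hn)
    simpa [he] using k
  have hlb : ∀ n, 2 ≤ n → c ≤ e n := by
    intro n hn
    have h := hc (x n)
    rw [← EReal.coe_toReal (hfin2 n hn) (hfbot _), ← EReal.coe_add] at h
    have h' : c ≤ (f (x n)).toReal + g (x n) := by exact_mod_cast h
    have : 0 ≤ M2 * ‖x (n - 1) - x n‖ ^ 2 := mul_nonneg hM2n (sq_nonneg _)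
    simp only [he]; linarith
  have hant : Antitone fun k => e (k + 2) := by
    apply antitone_nat_of_succ_le
    intro k
    have h := hdec (k + 2) (by omega)
    have h0 : 0 ≤ (M1 - M2) * ‖x (k + 2) - x (k + 3)‖ ^ 2 :=
      mul_nonneg hM12.le (sq_nonneg _)
    calc e (k + 1 + 2) = e (k + 2 + 1) := by ring_nf
      _ ≤ e (k + 2) := by linarith
  have hbdd : BddBelow (Set.range fun k => e (k + 2)) := by
    refine ⟨c, ?_⟩
    rintro _ ⟨k, rfl⟩
    exact hlb (k + 2) (by omega)
  have htend' : Tendsto (fun k => e (k + 2)) atTop (𝓝 (⨅ k, e (k + 2))) :=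
    tendsto_atTop_ciInf hant hbdd
  set l := ⨅ k, e (k + 2) with hl
  have htende : Tendsto e atTop (𝓝 l) := (tendsto_add_atTop_iff_nat 2).mp htend'
  have htende1 : Tendsto (fun n => e (n + 1)) atTop (𝓝 l) :=
    (tendsto_add_atTop_iff_nat 1).mpr htende
  -- the squared steps go to 0
  have hD : Tendsto (fun n => M2 / (M1 - M2) * (e n - e (n + 1))) atTop (𝓝 0) := by
    have := (htende.sub htende1).const_mul (M2 / (M1 - M2))
    simpa using this
  have hstep0 : Tendsto (fun k => M2 * ‖x (k + 2) - x (k + 3)‖ ^ 2) atTop (𝓝 0) := by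
    apply squeeze_zero (fun k => by positivity)
      (g := fun k => M2 / (M1 - M2) * (e (k + 2) - e (k + 3)))
    · intro k
      have h := hdec (k + 2) (by omega)
      have h2 : (M1 - M2) * ‖x (k + 2) - x (k + 3)‖ ^ 2 ≤ e (k + 2) - e (k + 3) := by
        have : e (k + 2 + 1) = e (k + 3) := by ring_nf
        linarith [hdec (k + 2) (by omega), this ▸ hdec (k + 2) (by omega)]
      have := mul_le_mul_of_nonneg_left h2 (by positivity : (0:ℝ) ≤ M2 / (M1 - M2))
      calc M2 * ‖x (k + 2) - x (k + 3)‖ ^ 2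
          = M2 / (M1 - M2) * ((M1 - M2) * ‖x (k + 2) - x (k + 3)‖ ^ 2) := by
            field_simp
        _ ≤ M2 / (M1 - M2) * (e (k + 2) - e (k + 3)) := this
    · have h1 : Tendsto (fun k => e (k + 2)) atTop (𝓝 l) :=
        (tendsto_add_atTop_iff_nat 2).mpr htende
      have h2 : Tendsto (fun k => e (k + 3)) atTop (𝓝 l) :=
        (tendsto_add_atTop_iff_nat 3).mpr htende
      simpa using (h1.sub h2).const_mul (M2 / (M1 - M2))
  have hnorm0 : Tendsto (fun n => M2 * ‖x (n - 1) - x n‖ ^ 2) atTop (𝓝 0) := by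
    apply (tendsto_add_atTop_iff_nat 3).mp
    exact hstep0.congr fun k => by norm_num
  have hsum : Tendsto (fun n => (f (x n)).toReal + g (x n)) atTop (𝓝 l) := by
    have := htende.sub hnorm0
    rw [sub_zero] at this
    exact this.congr fun n => by simp [he]; ring
  refine ⟨hmono, ⟨l, ?_⟩, ⟨l, ?_⟩⟩
  · apply (EReal.tendsto_coe.mpr htende).congr'
    filter_upwards [eventually_ge_atTop 2] with n hn
    rw [he]
    push_cast
    rw [EReal.coe_toReal (hfin2 n hn) (hfbot _)]
  · apply (EReal.tendsto_coe.mpr hsum).congr'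
    filter_upwards [eventually_ge_atTop 2] with n hn
    push_cast
    rw [EReal.coe_toReal (hfin2 n hn) (hfbot _)]
end
end

section
/- In the setting of Problem 1, choose μ > 0, α̲ > 0 and β ≥ 0 satisfying μ(σ − L_{∇g}α̲) > β(μ² + 1), define M_1 = (σ − ᾱL_{∇g})/(2ᾱ) − μβ/(2α̲) and M_2 = β/(2μα̲), choose ᾱ > α̲ such that M_1 > M_2, assume f + g is coercive, and let (x_n)_{n∈ℕ} be a sequence generated by Algorithm 1. Define H : ℝ^m × ℝ^m → (−∞,+∞] by H(x,y) = (f+g)(x) + M_2‖x−y‖². Then: if (x_{n_k})_{k∈ℕ} is any subsequence converging to some x ∈ ℝ^m, one has H(x_{n_k}, x_{n_k−1}) → H(x,x) as k → +∞; moreover, at least one such convergent subsequence exists. -/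
open Filter Topology RealInnerProductSpace

noncomputable section

variable {E : Type*} [NormedAddCommGroup E] [InnerProductSpace ℝ E]

section helpers
variable [CompleteSpace E]

lemma line_hasDerivAt (φ : E → ℝ) (φ' : E → E) (hd : ∀ z, HasGradientAt φ (φ' z) z)
    (y u : E) (t : ℝ) :
    HasDerivAt (fun s : ℝ => φ (y + s • (u - y))) ⟪φ' (y + t • (u - y)), u - y⟫ t := by
  have hline : HasDerivAt (fun s : ℝ => y + s • (u - y)) (u - y) t := by
    simpa using ((hasDerivAt_id t).smul_const (u - y)).const_add y
  have := (hd (y + t • (u - y))).hasFDerivAt.comp_hasDerivAt t hline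
  simpa [InnerProductSpace.toDual_apply_apply, Function.comp_def] using this

lemma convex_grad_ineq (φ : E → ℝ) (φ' : E → E) (hd : ∀ z, HasGradientAt φ (φ' z) z)
    (hc : ConvexOn ℝ Set.univ φ) (y u : E) :
    φ y + ⟪φ' y, u - y⟫ ≤ φ u := by
  have hψc : ConvexOn ℝ Set.univ (fun s : ℝ => φ (y + s • (u - y))) := by
    have := hc.comp_affineMap (AffineMap.lineMap y u)
    have he : (φ ∘ (AffineMap.lineMap y u)) = fun s : ℝ => φ (y + s • (u - y)) := by
      funext s; simp [AffineMap.lineMap_apply, add_comm]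
    rw [he] at this
    simpa using this
  have hs := hψc.le_slope_of_hasDerivAt (Set.mem_univ (0:ℝ)) (Set.mem_univ (1:ℝ)) one_pos
    (by simpa using line_hasDerivAt φ φ' hd y u 0)
  simp [slope_def_field] at hs
  linarith

lemma descent_lemma (g : E → ℝ) (g' : E → E) (hd : ∀ z, HasGradientAt g (g' z) z)
    (L : ℝ) (hL : 0 ≤ L) (hlip : ∀ z w, ‖g' z - g' w‖ ≤ L * ‖z - w‖) (y u : E) :
    g u ≤ g y + ⟪g' y, u - y⟫ + L / 2 * ‖u - y‖ ^ 2 := by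
  have hg'cont : Continuous g' := by
    refine (LipschitzWith.of_dist_le_mul (K := Real.toNNReal L) ?_).continuous
    intro a b; rw [dist_eq_norm, dist_eq_norm, Real.coe_toNNReal L hL]; exact hlip a b
  set Δ := u - y with hΔ
  set ψ' : ℝ → ℝ := fun t => ⟪g' (y + t • Δ), Δ⟫ with hψ'
  have hψ'cont : Continuous ψ' := by
    apply Continuous.inner
    · exact hg'cont.comp (by continuity)
    · exact continuous_const
  have hint := intervalIntegral.integral_eq_sub_of_hasDerivAt
    (f := fun t : ℝ => g (y + t • Δ)) (f' := ψ') (a := 0) (b := 1)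
    (fun t _ => line_hasDerivAt g g' hd y u t) (hψ'cont.intervalIntegrable 0 1)
  have hbound : ∫ t in (0:ℝ)..1, ψ' t ≤ ∫ t in (0:ℝ)..1, (⟪g' y, Δ⟫ + (L * ‖Δ‖ ^ 2) * t) := by
    apply intervalIntegral.integral_mono_on zero_le_one (hψ'cont.intervalIntegrable 0 1)
      ((Continuous.intervalIntegrable (by continuity) 0 1 :
        IntervalIntegrable (fun t : ℝ => ⟪g' y, Δ⟫ + (L * ‖Δ‖ ^ 2) * t) MeasureTheory.volume 0 1))
    intro t ht
    have h1 : ψ' t - ⟪g' y, Δ⟫ = ⟪g' (y + t • Δ) - g' y, Δ⟫ := by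
      rw [inner_sub_left]
    have h2 : ⟪g' (y + t • Δ) - g' y, Δ⟫ ≤ ‖g' (y + t • Δ) - g' y‖ * ‖Δ‖ :=
      real_inner_le_norm _ _
    have h3 : ‖g' (y + t • Δ) - g' y‖ ≤ L * (t * ‖Δ‖) := by
      have := hlip (y + t • Δ) y
      simpa [norm_smul, abs_of_nonneg ht.1] using this
    have h4 : ‖g' (y + t • Δ) - g' y‖ * ‖Δ‖ ≤ L * (t * ‖Δ‖) * ‖Δ‖ :=
      mul_le_mul_of_nonneg_right h3 (norm_nonneg _)
    have h5 : L * (t * ‖Δ‖) * ‖Δ‖ = L * ‖Δ‖ ^ 2 * t := by ring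
    linarith
  have hrhs : ∫ t in (0:ℝ)..1, (⟪g' y, Δ⟫ + (L * ‖Δ‖ ^ 2) * t) = ⟪g' y, Δ⟫ + L / 2 * ‖Δ‖ ^ 2 := by
    rw [intervalIntegral.integral_add (intervalIntegrable_const)
      ((Continuous.intervalIntegrable (by continuity) 0 1 :
        IntervalIntegrable (fun t : ℝ => (L * ‖Δ‖ ^ 2) * t) MeasureTheory.volume 0 1)),
      intervalIntegral.integral_const, intervalIntegral.integral_const_mul, integral_id]
    norm_num
    ring
  have hfin : g (y + (1:ℝ) • Δ) - g (y + (0:ℝ) • Δ) ≤ ⟪g' y, Δ⟫ + L / 2 * ‖Δ‖ ^ 2 := by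
    rw [← hint, ← hrhs]; exact hbound
  have h5 : y + (1:ℝ) • Δ = u := by rw [hΔ]; simp
  have h6 : y + (0:ℝ) • Δ = y := by simp
  rw [h5, h6] at hfin; linarith

lemma hasGradientAt_half_sq (σ : ℝ) (y : E) :
    HasGradientAt (fun z : E => σ / 2 * ‖z‖ ^ 2) (σ • y) y := by
  rw [hasGradientAt_iff_hasFDerivAt]
  have h1 : HasFDerivAt (fun z : E => (⟪z, z⟫ : ℝ))
      ((fderivInnerCLM ℝ (y, y)).comp ((ContinuousLinearMap.id ℝ E).prod
        (ContinuousLinearMap.id ℝ E))) y :=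
    (hasFDerivAt_id y).inner ℝ (hasFDerivAt_id y)
  have h2 : HasFDerivAt (fun z : E => σ / 2 * ‖z‖ ^ 2)
      ((σ / 2) • ((fderivInnerCLM ℝ (y, y)).comp ((ContinuousLinearMap.id ℝ E).prod
        (ContinuousLinearMap.id ℝ E)))) y := by
    have := h1.const_smul (σ / 2)
    have he : (fun z : E => σ / 2 * ‖z‖ ^ 2) = fun z : E => (σ / 2) • (⟪z, z⟫ : ℝ) := by
      funext z; rw [real_inner_self_eq_norm_sq]; simp [smul_eq_mul]
    rw [he]
    exact this
  refine h2.congr_fderiv ?_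
  ext w
  simp [InnerProductSpace.toDual_apply_apply, real_inner_smul_left, fderivInnerCLM_apply,
    real_inner_comm y w]
  ring

lemma strong_conv_ineq (F : E → ℝ) (σ : ℝ) (hFdiff : Differentiable ℝ F)
    (hFconv : ConvexOn ℝ Set.univ fun z => F z - σ / 2 * ‖z‖ ^ 2) (y u : E) :
    F y + ⟪gradient F y, u - y⟫ + σ / 2 * ‖u - y‖ ^ 2 ≤ F u := by
  have hd : ∀ z, HasGradientAt (fun z : E => F z - σ / 2 * ‖z‖ ^ 2)
      (gradient F z - σ • z) z := by
    intro z
    rw [hasGradientAt_iff_hasFDerivAt, map_sub]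
    exact ((hFdiff z).hasGradientAt.hasFDerivAt).sub (hasGradientAt_half_sq σ z).hasFDerivAt
  have h := convex_grad_ineq _ _ hd hFconv y u
  have h1 : ⟪gradient F y - σ • y, u - y⟫
      = ⟪gradient F y, u - y⟫ - σ * (⟪y, u⟫ - ⟪y, y⟫) := by
    simp [inner_sub_left, inner_sub_right, real_inner_smul_left]
    ring
  have h2 : ‖u - y‖ ^ 2 = ‖u‖ ^ 2 - 2 * ⟪u, y⟫ + ‖y‖ ^ 2 := norm_sub_sq_real u y
  have h3 : (⟪y, y⟫ : ℝ) = ‖y‖ ^ 2 := real_inner_self_eq_norm_sq y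
  have h4 : (⟪y, u⟫ : ℝ) = ⟪u, y⟫ := real_inner_comm u y
  rw [h1] at h
  rw [h3, h4] at h
  rw [h2]
  linarith [h]

end helpers

set_option maxHeartbeats 1000000 in
/-- Lemma 3.5 (H3): along any convergent subsequence `x (φ k) → xb` one has
`H(x_{n_k}, x_{n_k - 1}) → H(xb, xb) = (f+g)(xb)`, and at least one convergent
subsequence exists. -/
theorem stmt12
    (m : ℕ)
    (f : EuclideanSpace ℝ (Fin m) → EReal)
    -- `f` is proper (never `⊥`, somewhere finite), lower semicontinuous and bounded below
    (hfbot : ∀ z, f z ≠ ⊥) (hfproper : ∃ z, f z ≠ ⊤)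
    (hflsc : LowerSemicontinuous f)
    (hfbdd : ∃ cl : ℝ, ∀ z, (cl : EReal) ≤ f z)
    -- `g` is differentiable with `Lg`-Lipschitz gradient
    (g : EuclideanSpace ℝ (Fin m) → ℝ) (Lg : ℝ) (hLg : 0 ≤ Lg)
    (hgdiff : Differentiable ℝ g)
    (hglip : ∀ z w, ‖gradient g z - gradient g w‖ ≤ Lg * ‖z - w‖)
    -- `F` is `σ`-strongly convex and differentiable with `LF`-Lipschitz gradient
    (F : EuclideanSpace ℝ (Fin m) → ℝ) (σ LF : ℝ) (hσ : 0 < σ) (hLF : 0 < LF)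
    (hFconv : ConvexOn ℝ Set.univ fun z => F z - σ / 2 * ‖z‖ ^ 2)
    (hFdiff : Differentiable ℝ F)
    (hFlip : ∀ z w, ‖gradient F z - gradient F w‖ ≤ LF * ‖z - w‖)
    -- parameters of the algorithm
    (αlo αhi β : ℝ) (hαlo : 0 < αlo) (hαorder : αlo ≤ αhi) (hβ : 0 ≤ β)
    (α βs : ℕ → ℝ)
    (hα : ∀ n, 1 ≤ n → αlo ≤ α n ∧ α n ≤ αhi)
    (hβs : ∀ n, 1 ≤ n → 0 ≤ βs n ∧ βs n ≤ β)
    -- the sequence generated by Algorithm 1: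
    -- `x (n+1)` minimizes `u ↦ D_F(u, x n) + α n • ⟪u, ∇g(x n)⟫ + βs n • ⟪u, x (n-1) - x n⟫ + α n • f u`
    (x : ℕ → EuclideanSpace ℝ (Fin m))
    (halg : ∀ n, 1 ≤ n → ∀ u,
      ((F (x (n + 1)) - F (x n) - ⟪gradient F (x n), x (n + 1) - x n⟫
          + α n * ⟪x (n + 1), gradient g (x n)⟫
          + βs n * ⟪x (n + 1), x (n - 1) - x n⟫ : ℝ) : EReal)
        + (α n : EReal) * f (x (n + 1))
      ≤ ((F u - F (x n) - ⟪gradient F (x n), u - x n⟫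
          + α n * ⟪u, gradient g (x n)⟫
          + βs n * ⟪u, x (n - 1) - x n⟫ : ℝ) : EReal)
        + (α n : EReal) * f u)
    -- the parameters `μ, αlo, β` satisfy `μ(σ - Lg·αlo) > β(μ² + 1)` and `αhi` is chosen
    -- with `αlo < αhi` such that `M1 > M2`
    (μ : ℝ) (hμ : 0 < μ)
    (hcond : β * (μ ^ 2 + 1) < μ * (σ - Lg * αlo))
    (M1 M2 : ℝ)
    (hM1 : M1 = (σ - αhi * Lg) / (2 * αhi) - μ * β / (2 * αlo))
    (hM2 : M2 = β / (2 * μ * αlo))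
    (hαstrict : αlo < αhi) (hM : M2 < M1)

    -- `f + g` is coercive
    (hcoer : Tendsto (fun z => f z + ((g z : ℝ) : EReal))
      (comap (fun z : EuclideanSpace ℝ (Fin m) => ‖z‖) atTop) (𝓝 ⊤))
    :
    (∀ (φ : ℕ → ℕ) (xb : EuclideanSpace ℝ (Fin m)), StrictMono φ →
      Tendsto (fun k => x (φ k)) atTop (𝓝 xb) →
      Tendsto (fun k => f (x (φ k))
          + ((g (x (φ k)) + M2 * ‖x (φ k) - x (φ k - 1)‖ ^ 2 : ℝ) : EReal))
        atTop (𝓝 (f xb + ((g xb : ℝ) : EReal)))) ∧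
    (∃ (φ : ℕ → ℕ) (xb : EuclideanSpace ℝ (Fin m)), StrictMono φ ∧
      Tendsto (fun k => x (φ k)) atTop (𝓝 xb)) := by  classical
  obtain ⟨z₀, hz₀⟩ := hfproper
  obtain ⟨cl, hcl⟩ := hfbdd
  set fr : ℕ → ℝ := fun n => (f (x n)).toReal with hfrdef
  -- gradients
  have hg' : ∀ z, HasGradientAt g (gradient g z) z := fun z => (hgdiff z).hasGradientAt
  -- finiteness of f along the iterates
  have hfin : ∀ n, 2 ≤ n → f (x n) ≠ ⊤ := by
    intro n hn hTop
    obtain ⟨k, rfl⟩ : ∃ k, n = k + 1 := ⟨n - 1, by omega⟩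
    have hk : 1 ≤ k := by omega
    have h := halg k hk z₀
    rw [hTop] at h
    have hαk : (0:ℝ) < α k := lt_of_lt_of_le hαlo (hα k hk).1
    rw [EReal.coe_mul_top_of_pos hαk, EReal.coe_add_top] at h
    have hz : f z₀ = (((f z₀).toReal : ℝ) : EReal) := (EReal.coe_toReal hz₀ (hfbot _)).symm
    rw [hz, ← EReal.coe_mul, ← EReal.coe_add] at h
    exact EReal.coe_ne_top _ (top_le_iff.mp h)
  have hfeq : ∀ n, 2 ≤ n → f (x n) = ((fr n : ℝ) : EReal) :=
    fun n hn => (EReal.coe_toReal (hfin n hn) (hfbot _)).symm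
  -- realified algorithm inequality
  have hkey : ∀ n, 1 ≤ n → ∀ u, f u ≠ ⊤ →
      F (x (n + 1)) - F (x n) - ⟪gradient F (x n), x (n + 1) - x n⟫
        + α n * ⟪x (n + 1), gradient g (x n)⟫
        + βs n * ⟪x (n + 1), x (n - 1) - x n⟫ + α n * fr (n + 1)
      ≤ F u - F (x n) - ⟪gradient F (x n), u - x n⟫
        + α n * ⟪u, gradient g (x n)⟫
        + βs n * ⟪u, x (n - 1) - x n⟫ + α n * (f u).toReal := by
    intro n hn u hu
    have h := halg n hn u
    have hu' : f u = (((f u).toReal : ℝ) : EReal) := (EReal.coe_toReal hu (hfbot u)).symm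
    rw [hfeq (n+1) (by omega), hu', ← EReal.coe_mul, ← EReal.coe_mul, ← EReal.coe_add,
      ← EReal.coe_add, EReal.coe_le_coe_iff] at h
    exact h
  -- one-step descent inequality
  have hdesc : ∀ n, 2 ≤ n →
      fr (n + 1) + g (x (n + 1)) + M1 * ‖x (n + 1) - x n‖ ^ 2
        ≤ fr n + g (x n) + M2 * ‖x n - x (n - 1)‖ ^ 2 := by
    intro n hn
    have hn1 : 1 ≤ n := by omega
    have hαn := hα n hn1
    have hβn := hβs n hn1
    have hapos : 0 < α n := lt_of_lt_of_le hαlo hαn.1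
    have h := hkey n hn1 (x n) (hfin n hn)
    have hfrn : (f (x n)).toReal = fr n := rfl
    rw [hfrn] at h
    simp only [sub_self, inner_zero_right] at h
    set Δ1 := x (n+1) - x n with hΔ1d
    set Δ0 := x n - x (n-1) with hΔ0d
    have hF := strong_conv_ineq F σ hFdiff hFconv (x n) (x (n+1))
    have hgd := descent_lemma g (gradient g) hg' Lg hLg hglip (x n) (x (n+1))
    have e1 : α n * ⟪x (n+1), gradient g (x n)⟫ - α n * ⟪x n, gradient g (x n)⟫
        = α n * ⟪Δ1, gradient g (x n)⟫ := by
      rw [← mul_sub, ← inner_sub_left]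
    have e2 : βs n * ⟪x (n+1), x (n-1) - x n⟫ - βs n * ⟪x n, x (n-1) - x n⟫
        = - (βs n * ⟪Δ1, Δ0⟫) := by
      rw [← mul_sub, ← inner_sub_left, show x (n-1) - x n = -Δ0 by rw [hΔ0d]; abel,
        inner_neg_right]
      ring
    have hgda : α n * g (x (n+1))
        ≤ α n * (g (x n) + ⟪gradient g (x n), Δ1⟫ + Lg/2 * ‖Δ1‖^2) :=
      mul_le_mul_of_nonneg_left hgd hapos.le
    have ecomm : α n * ⟪Δ1, gradient g (x n)⟫ = α n * ⟪gradient g (x n), Δ1⟫ := by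
      rw [real_inner_comm]
    have hip : βs n * ⟪Δ1, Δ0⟫ ≤ β * (‖Δ1‖ * ‖Δ0‖) := by
      have h1 : ⟪Δ1, Δ0⟫ ≤ ‖Δ1‖ * ‖Δ0‖ := real_inner_le_norm _ _
      have h2 := mul_le_mul_of_nonneg_left h1 hβn.1
      have h3 := mul_le_mul_of_nonneg_right hβn.2 (mul_nonneg (norm_nonneg Δ1) (norm_nonneg Δ0))
      linarith
    have hPQ : α n * fr (n+1) + α n * g (x (n+1))
        ≤ α n * fr n + α n * g (x n) + (α n * Lg/2 - σ/2) * ‖Δ1‖^2 + β * (‖Δ1‖ * ‖Δ0‖) := by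
      linarith [h, hF, hgda, e1, e2, hip, ecomm]

    rw [← mul_le_mul_iff_right₀ hapos]
    have c1a : α n * ((σ - αhi*Lg)/(2*αhi)) * ‖Δ1‖^2 ≤ (σ/2 - α n * Lg/2) * ‖Δ1‖^2 := by
      apply mul_le_mul_of_nonneg_right _ (sq_nonneg _)
      rw [mul_div_assoc', div_le_iff₀ (by linarith : (0:ℝ) < 2*αhi)]
      nlinarith [mul_le_mul_of_nonneg_left hαn.2 hσ.le]
    have c1b : μ*β/2 * ‖Δ1‖^2 ≤ α n * (μ*β/(2*αlo)) * ‖Δ1‖^2 := by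
      apply mul_le_mul_of_nonneg_right _ (sq_nonneg _)
      rw [mul_div_assoc', le_div_iff₀ (by linarith : (0:ℝ) < 2*αlo)]
      nlinarith [mul_le_mul_of_nonneg_left hαn.1 (mul_nonneg hμ.le hβ)]
    have c2 : β * (‖Δ1‖ * ‖Δ0‖) ≤ μ*β/2 * ‖Δ1‖^2 + β/(2*μ) * ‖Δ0‖^2 := by
      have h2μ : (0:ℝ) < 2*μ := by linarith
      have hid : μ*β/2 * ‖Δ1‖^2 + β/(2*μ) * ‖Δ0‖^2 - β * (‖Δ1‖ * ‖Δ0‖)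
          = β/(2*μ) * (μ*‖Δ1‖ - ‖Δ0‖)^2 := by
        field_simp
        ring
      linarith [mul_nonneg (div_nonneg hβ h2μ.le) (sq_nonneg (μ*‖Δ1‖ - ‖Δ0‖))]
    have c3 : β/(2*μ) * ‖Δ0‖^2 ≤ α n * M2 * ‖Δ0‖^2 := by
      apply mul_le_mul_of_nonneg_right _ (sq_nonneg _)
      rw [hM2, mul_div_assoc', div_le_div_iff₀ (by linarith : (0:ℝ) < 2*μ)
        (by positivity : (0:ℝ) < 2*μ*αlo)]
      nlinarith [mul_le_mul_of_nonneg_left hαn.1 hβ, hμ.le]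
    rw [hM1]
    nlinarith [hPQ, c1a, c1b, c2, c3]
  have hM2nn : 0 ≤ M2 := by
    rw [hM2]; positivity
  set Hh : ℕ → ℝ := fun n => fr n + g (x n) + M2 * ‖x n - x (n - 1)‖ ^ 2 with hHhdef
  have hstep : ∀ n, 2 ≤ n → Hh (n + 1) + (M1 - M2) * ‖x (n + 1) - x n‖ ^ 2 ≤ Hh n := by
    intro n hn
    have := hdesc n hn
    have he : (n + 1 : ℕ) - 1 = n := by omega
    simp only [hHhdef, he]
    linarith [this]
  have hmono : ∀ n, 2 ≤ n → Hh n ≤ Hh 2 := by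
    intro n hn
    induction n, hn using Nat.le_induction with
    | base => exact le_refl _
    | succ n hn ih =>
      have := hstep n hn
      nlinarith [mul_nonneg (le_of_lt (by linarith [hM] : (0:ℝ) < M1 - M2)) (sq_nonneg ‖x (n+1) - x n‖)]
  have hfg_ub : ∀ n, 2 ≤ n → fr n + g (x n) ≤ Hh 2 := by
    intro n hn
    have := hmono n hn
    have h2 : 0 ≤ M2 * ‖x n - x (n - 1)‖ ^ 2 := mul_nonneg hM2nn (sq_nonneg _)
    simp only [hHhdef] at this ⊢
    linarith
  -- boundedness of the iterates
  have hbdd : ∃ R : ℝ, 0 < R ∧ ∀ n, ‖x n‖ ≤ R := by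
    have hev2 : ∀ᶠ z in comap (fun z : EuclideanSpace ℝ (Fin m) => ‖z‖) atTop,
        ((Hh 2 : ℝ) : EReal) < f z + ((g z : ℝ) : EReal) :=
      hcoer.eventually (eventually_gt_nhds (EReal.coe_lt_top _))
    rw [eventually_comap, eventually_atTop] at hev2
    obtain ⟨R₀, hR₀⟩ := hev2
    set R := max R₀ (max ‖x 0‖ ‖x 1‖) + 1 with hRdef
    have hRnn : (0:ℝ) ≤ max R₀ (max ‖x 0‖ ‖x 1‖) :=
      le_trans (norm_nonneg (x 0)) (le_trans (le_max_left _ _) (le_max_right _ _))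
    refine ⟨R, by linarith, ?_⟩
    intro n
    match n, (by omega : n = 0 ∨ n = 1 ∨ 2 ≤ n) with
    | _, Or.inl rfl =>
      calc ‖x 0‖ ≤ max R₀ (max ‖x 0‖ ‖x 1‖) := le_trans (le_max_left _ _) (le_max_right _ _)
        _ ≤ R := by linarith
    | _, Or.inr (Or.inl rfl) =>
      calc ‖x 1‖ ≤ max R₀ (max ‖x 0‖ ‖x 1‖) := le_trans (le_max_right _ _) (le_max_right _ _)
        _ ≤ R := by linarith
    | n, Or.inr (Or.inr hn) => ?_
    by_contra hcon
    push_neg at hcon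
    have hge : R₀ ≤ ‖x n‖ := by
      have : R₀ ≤ R := by
        calc R₀ ≤ max R₀ (max ‖x 0‖ ‖x 1‖) := le_max_left _ _
          _ ≤ R := by linarith
      linarith
    have hlt := hR₀ ‖x n‖ hge (x n) rfl
    rw [hfeq n hn, ← EReal.coe_add, EReal.coe_lt_coe_iff] at hlt
    have := hfg_ub n hn
    linarith
  obtain ⟨R, hRpos, hR⟩ := hbdd
  -- lower bound for f + g along the iterates
  have hlb : ∃ c : ℝ, ∀ n, 2 ≤ n → c ≤ fr n + g (x n) := by
    obtain ⟨zmin, hzmem, hzmin⟩ :=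
      (isCompact_closedBall (0 : EuclideanSpace ℝ (Fin m)) R).exists_isMinOn
        ⟨x 0, by rw [Metric.mem_closedBall, dist_zero_right]; exact hR 0⟩
        hgdiff.continuous.continuousOn
    refine ⟨cl + g zmin, fun n hn => ?_⟩
    have h1 : cl ≤ fr n := by
      have := hcl (x n)
      rw [hfeq n hn, EReal.coe_le_coe_iff] at this
      exact this
    have h2 : g zmin ≤ g (x n) :=
      isMinOn_iff.mp hzmin (x n) (by rw [Metric.mem_closedBall, dist_zero_right]; exact hR n)
    linarith
  obtain ⟨c, hc⟩ := hlb
  -- the squared increments are summable, hence tend to zero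
  have hΔnorm : Tendsto (fun n => ‖x (n + 1) - x n‖) atTop (𝓝 0) := by
    have hγ : (0:ℝ) < M1 - M2 := by linarith
    set u : ℕ → ℝ := fun i => ‖x (i+3) - x (i+2)‖^2 with hud
    have htel : ∀ N, (M1 - M2) * ∑ i ∈ Finset.range N, u i ≤ Hh 2 - Hh (N+2) := by
      intro N
      induction N with
      | zero => simp
      | succ N ih =>
        rw [Finset.sum_range_succ, mul_add]
        have hst := hstep (N+2) (by omega)
        have he : (N+2+1 : ℕ) = N+3 := by omega
        rw [he] at hst
        have heu : u N = ‖x (N+3) - x (N+2)‖^2 := rfl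
        rw [heu]
        linarith
    have hpart : ∀ N, ∑ i ∈ Finset.range N, u i ≤ (Hh 2 - c)/(M1 - M2) := by
      intro N
      have h2 := htel N
      have h3 : c ≤ Hh (N+2) := by
        have hcc := hc (N+2) (by omega)
        have : (0:ℝ) ≤ M2 * ‖x (N+2) - x (N+2-1)‖^2 := mul_nonneg hM2nn (sq_nonneg _)
        simp only [hHhdef] at *
        linarith
      rw [le_div_iff₀ hγ]
      nlinarith
    have hsum : Summable u := summable_of_sum_range_le (fun i => sq_nonneg _) hpart
    have h0 : Tendsto u atTop (𝓝 0) := hsum.tendsto_atTop_zero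
    have h0' : Tendsto (fun n => ‖x (n+1) - x n‖^2) atTop (𝓝 0) := by
      have : u = fun i => (fun n => ‖x (n+1) - x n‖^2) (i + 2) := by
        funext i; norm_num [hud]
      rw [this] at h0
      exact (tendsto_add_atTop_iff_nat 2).mp h0
    have hcomp := (Real.continuous_sqrt.tendsto 0).comp h0'
    simp only [Real.sqrt_zero] at hcomp
    refine hcomp.congr fun n => ?_
    simp only [Function.comp]
    exact Real.sqrt_sq (norm_nonneg _)
  have hΔ0 : Tendsto (fun n => x (n + 1) - x n) atTop (𝓝 (0 : EuclideanSpace ℝ (Fin m))) := by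
    rw [tendsto_zero_iff_norm_tendsto_zero]
    exact hΔnorm
  constructor
  · -- part 1
    intro φ xb hφ hconv
    have hφtop : Tendsto φ atTop atTop := hφ.tendsto_atTop
    have hφ1top : Tendsto (fun k => φ k - 1) atTop atTop := by
      rw [tendsto_atTop]
      intro b
      filter_upwards [hφtop.eventually_ge_atTop (b + 1)] with k hk
      omega
    have hφ2top : Tendsto (fun k => φ k - 2) atTop atTop := by
      rw [tendsto_atTop]
      intro b
      filter_upwards [hφtop.eventually_ge_atTop (b + 2)] with k hk
      omega
    have hd1 : Tendsto (fun k => x (φ k) - x (φ k - 1)) atTop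
        (𝓝 (0 : EuclideanSpace ℝ (Fin m))) := by
      have hcc := hΔ0.comp hφ1top
      refine hcc.congr' ?_
      filter_upwards [hφtop.eventually_ge_atTop 1] with k hk
      simp only [Function.comp]
      rw [show φ k - 1 + 1 = φ k by omega]
    have hx1 : Tendsto (fun k => x (φ k - 1)) atTop (𝓝 xb) := by
      have := hconv.sub hd1
      simpa using this
    have hw : Tendsto (fun k => x (φ k - 2) - x (φ k - 1)) atTop
        (𝓝 (0 : EuclideanSpace ℝ (Fin m))) := by
      have hcc := (hΔ0.comp hφ2top).neg
      rw [neg_zero] at hcc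
      refine hcc.congr' ?_
      filter_upwards [hφtop.eventually_ge_atTop 2] with k hk
      simp only [Function.comp]
      rw [show φ k - 2 + 1 = φ k - 1 by omega, neg_sub]
    have hgradFcont : Continuous (gradient F) := by
      refine (LipschitzWith.of_dist_le_mul (K := Real.toNNReal LF) ?_).continuous
      intro a b; rw [dist_eq_norm, dist_eq_norm, Real.coe_toNNReal LF hLF.le]; exact hFlip a b
    have hgradgcont : Continuous (gradient g) := by
      refine (LipschitzWith.of_dist_le_mul (K := Real.toNNReal Lg) ?_).continuous
      intro a b; rw [dist_eq_norm, dist_eq_norm, Real.coe_toNNReal Lg hLg]; exact hglip a b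
    have hxdiff0 : Tendsto (fun k => xb - x (φ k)) atTop
        (𝓝 (0 : EuclideanSpace ℝ (Fin m))) := by
      have hz : Tendsto (fun k => xb - x (φ k)) atTop (𝓝 (xb - xb)) :=
        tendsto_const_nhds.sub hconv
      simpa using hz
    have hnorm0 : Tendsto (fun k => ‖xb - x (φ k)‖) atTop (𝓝 0) := by
      have := (continuous_norm.tendsto (0 : EuclideanSpace ℝ (Fin m))).comp hxdiff0
      simpa [Function.comp_def] using this
    have hrk : Tendsto (fun k => g (x (φ k)) + M2 * ‖x (φ k) - x (φ k - 1)‖ ^ 2)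
        atTop (𝓝 (g xb)) := by
      have h1 : Tendsto (fun k => g (x (φ k))) atTop (𝓝 (g xb)) :=
        (hgdiff.continuous.tendsto xb).comp hconv
      have h2 : Tendsto (fun k => ‖x (φ k) - x (φ k - 1)‖) atTop (𝓝 0) := by
        have := (continuous_norm.tendsto (0 : EuclideanSpace ℝ (Fin m))).comp hd1
        simpa [Function.comp_def] using this
      have h3 : Tendsto (fun k => M2 * ‖x (φ k) - x (φ k - 1)‖ ^ 2) atTop (𝓝 0) := by
        have := (h2.pow 2).const_mul M2
        simpa using this
      have := h1.add h3
      simpa using this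
    by_cases hxbtop : f xb = ⊤
    · -- the limit is ⊤
      rw [hxbtop, EReal.top_add_coe]
      rw [EReal.tendsto_nhds_top_iff_real]
      intro M
      have h1 : ∀ᶠ k in atTop, ((M - g xb + 1 : ℝ) : EReal) < f (x (φ k)) :=
        hconv.eventually (hflsc xb _ (by beta_reduce; rw [hxbtop]; exact EReal.coe_lt_top _))
      have h2 : ∀ᶠ k in atTop,
          g xb - 1 ≤ g (x (φ k)) + M2 * ‖x (φ k) - x (φ k - 1)‖ ^ 2 :=
        hrk.eventually (eventually_ge_nhds (by linarith : g xb - 1 < g xb))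
      filter_upwards [h1, h2] with k hk1 hk2
      have hMeq : ((M : ℝ) : EReal) = ((M - g xb + 1 : ℝ) : EReal) + ((g xb - 1 : ℝ) : EReal) := by
        rw [← EReal.coe_add]; norm_num
      rw [hMeq]
      exact EReal.add_lt_add_of_lt_of_le hk1 (EReal.coe_le_coe_iff.mpr hk2)
        (EReal.coe_ne_bot _) (EReal.coe_ne_top _)
    · -- f xb is finite
      set t : ℝ := (f xb).toReal with htdef
      have hxbeq : f xb = ((t : ℝ) : EReal) := (EReal.coe_toReal hxbtop (hfbot xb)).symm
      -- the error majorant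
      set S : ℕ → ℝ := fun k => |F xb - F (x (φ k))|
        + ‖gradient F (x (φ k - 1))‖ * ‖xb - x (φ k)‖
        + αhi * (‖xb - x (φ k)‖ * ‖gradient g (x (φ k - 1))‖)
        + β * (‖xb - x (φ k)‖ * ‖x (φ k - 2) - x (φ k - 1)‖) with hSdef
      have hSnn : ∀ k, 0 ≤ S k := by
        intro k
        have h1 : (0:ℝ) ≤ αhi := le_trans hαlo.le hαorder
        positivity
      have hS0 : Tendsto S atTop (𝓝 0) := by
        have hT1 : Tendsto (fun k => |F xb - F (x (φ k))|) atTop (𝓝 0) := by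
          have hz : Tendsto (fun k => F xb - F (x (φ k))) atTop (𝓝 (F xb - F xb)) :=
            tendsto_const_nhds.sub ((hFdiff.continuous.tendsto xb).comp hconv)
          have := hz.abs
          simpa using this
        have hT2 : Tendsto (fun k => ‖gradient F (x (φ k - 1))‖ * ‖xb - x (φ k)‖)
            atTop (𝓝 0) := by
          have hA : Tendsto (fun k => ‖gradient F (x (φ k - 1))‖) atTop
              (𝓝 ‖gradient F xb‖) :=
            ((continuous_norm.comp hgradFcont).tendsto xb).comp hx1
          have := hA.mul hnorm0
          simpa using this
        have hT3 : Tendsto (fun k => αhi * (‖xb - x (φ k)‖ * ‖gradient g (x (φ k - 1))‖))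
            atTop (𝓝 0) := by
          have hA : Tendsto (fun k => ‖gradient g (x (φ k - 1))‖) atTop
              (𝓝 ‖gradient g xb‖) :=
            ((continuous_norm.comp hgradgcont).tendsto xb).comp hx1
          have := (hnorm0.mul hA).const_mul αhi
          simpa using this
        have hT4 : Tendsto (fun k => β * (‖xb - x (φ k)‖ * ‖x (φ k - 2) - x (φ k - 1)‖))
            atTop (𝓝 0) := by
          have hB : Tendsto (fun k => ‖x (φ k - 2) - x (φ k - 1)‖) atTop (𝓝 0) := by
            have := (continuous_norm.tendsto (0 : EuclideanSpace ℝ (Fin m))).comp hw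
            simpa [Function.comp_def] using this
          have := (hnorm0.mul hB).const_mul β
          simpa using this
        have := ((hT1.add hT2).add hT3).add hT4
        simpa using this
      have hub : ∀ᶠ k in atTop, fr (φ k) ≤ t + S k / αlo := by
        filter_upwards [hφtop.eventually_ge_atTop 2] with k hk2
        have hn1 : 1 ≤ φ k - 1 := by omega
        have h := hkey (φ k - 1) hn1 xb hxbtop
        rw [show φ k - 1 + 1 = φ k by omega, show φ k - 1 - 1 = φ k - 2 by omega] at h
        have hαn := hα (φ k - 1) hn1
        have hβn := hβs (φ k - 1) hn1
        have hapos : 0 < α (φ k - 1) := lt_of_lt_of_le hαlo hαn.1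
        have hftr : (f xb).toReal = t := rfl
        rw [hftr] at h
        -- rearrange h into α_n * (fr (φ k) - t) ≤ bound
        have e0 : ⟪gradient F (x (φ k - 1)), x (φ k) - x (φ k - 1)⟫
            - ⟪gradient F (x (φ k - 1)), xb - x (φ k - 1)⟫
            = ⟪gradient F (x (φ k - 1)), x (φ k) - xb⟫ := by
          rw [← inner_sub_right]
          congr 1
          abel
        have e1 : α (φ k - 1) * ⟪xb, gradient g (x (φ k - 1))⟫
            - α (φ k - 1) * ⟪x (φ k), gradient g (x (φ k - 1))⟫
            = α (φ k - 1) * ⟪xb - x (φ k), gradient g (x (φ k - 1))⟫ := by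
          rw [← mul_sub, ← inner_sub_left]
        have e2 : βs (φ k - 1) * ⟪xb, x (φ k - 2) - x (φ k - 1)⟫
            - βs (φ k - 1) * ⟪x (φ k), x (φ k - 2) - x (φ k - 1)⟫
            = βs (φ k - 1) * ⟪xb - x (φ k), x (φ k - 2) - x (φ k - 1)⟫ := by
          rw [← mul_sub, ← inner_sub_left]
        -- individual bounds
        have b1 : F xb - F (x (φ k)) ≤ |F xb - F (x (φ k))| := le_abs_self _
        have b2 : ⟪gradient F (x (φ k - 1)), x (φ k) - xb⟫
            ≤ ‖gradient F (x (φ k - 1))‖ * ‖xb - x (φ k)‖ := by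
          have := real_inner_le_norm (gradient F (x (φ k - 1))) (x (φ k) - xb)
          rw [norm_sub_rev] at this
          exact this
        have b3 : α (φ k - 1) * ⟪xb - x (φ k), gradient g (x (φ k - 1))⟫
            ≤ αhi * (‖xb - x (φ k)‖ * ‖gradient g (x (φ k - 1))‖) := by
          have hi := abs_real_inner_le_norm (xb - x (φ k)) (gradient g (x (φ k - 1)))
          have h1 : α (φ k - 1) * ⟪xb - x (φ k), gradient g (x (φ k - 1))⟫
              ≤ α (φ k - 1) * |⟪xb - x (φ k), gradient g (x (φ k - 1))⟫| :=
            mul_le_mul_of_nonneg_left (le_abs_self _) hapos.le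
          have h2 : α (φ k - 1) * |⟪xb - x (φ k), gradient g (x (φ k - 1))⟫|
              ≤ αhi * |⟪xb - x (φ k), gradient g (x (φ k - 1))⟫| :=
            mul_le_mul_of_nonneg_right hαn.2 (abs_nonneg _)
          have h3 : αhi * |⟪xb - x (φ k), gradient g (x (φ k - 1))⟫|
              ≤ αhi * (‖xb - x (φ k)‖ * ‖gradient g (x (φ k - 1))‖) :=
            mul_le_mul_of_nonneg_left hi (le_trans hαlo.le hαorder)
          linarith
        have b4 : βs (φ k - 1) * ⟪xb - x (φ k), x (φ k - 2) - x (φ k - 1)⟫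
            ≤ β * (‖xb - x (φ k)‖ * ‖x (φ k - 2) - x (φ k - 1)‖) := by
          have hi := abs_real_inner_le_norm (xb - x (φ k)) (x (φ k - 2) - x (φ k - 1))
          have h1 : βs (φ k - 1) * ⟪xb - x (φ k), x (φ k - 2) - x (φ k - 1)⟫
              ≤ βs (φ k - 1) * |⟪xb - x (φ k), x (φ k - 2) - x (φ k - 1)⟫| :=
            mul_le_mul_of_nonneg_left (le_abs_self _) hβn.1
          have h2 : βs (φ k - 1) * |⟪xb - x (φ k), x (φ k - 2) - x (φ k - 1)⟫|
              ≤ β * |⟪xb - x (φ k), x (φ k - 2) - x (φ k - 1)⟫| :=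
            mul_le_mul_of_nonneg_right hβn.2 (abs_nonneg _)
          have h3 : β * |⟪xb - x (φ k), x (φ k - 2) - x (φ k - 1)⟫|
              ≤ β * (‖xb - x (φ k)‖ * ‖x (φ k - 2) - x (φ k - 1)‖) :=
            mul_le_mul_of_nonneg_left hi hβ
          linarith
        have hmain : α (φ k - 1) * (fr (φ k) - t) ≤ S k := by
          simp only [hSdef]
          nlinarith [h, e0, e1, e2, b1, b2, b3, b4]
        have hdiv : fr (φ k) - t ≤ S k / α (φ k - 1) := by
          rw [le_div_iff₀ hapos]
          linarith [hmain]
        have hdiv2 : S k / α (φ k - 1) ≤ S k / αlo :=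
          div_le_div_of_nonneg_left (hSnn k) hαlo hαn.1
        linarith
      have hfr : Tendsto (fun k => fr (φ k)) atTop (𝓝 t) := by
        rw [tendsto_order]
        constructor
        · intro a ha
          have hls := hflsc xb ((a : ℝ) : EReal) (by beta_reduce; rw [hxbeq]; exact_mod_cast ha)
          filter_upwards [hconv.eventually hls, hφtop.eventually_ge_atTop 2] with k hk1 hk2
          rw [hfeq (φ k) hk2] at hk1
          exact_mod_cast hk1
        · intro a ha
          have hS0' : Tendsto (fun k => S k / αlo) atTop (𝓝 0) := by
            have := hS0.div_const αlo
            simpa using this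
          filter_upwards [hub, hS0'.eventually (eventually_lt_nhds (by linarith : (0:ℝ) < a - t))]
            with k hk1 hk2
          linarith
      -- conclude
      have hreal : Tendsto
          (fun k => fr (φ k) + (g (x (φ k)) + M2 * ‖x (φ k) - x (φ k - 1)‖ ^ 2))
          atTop (𝓝 (t + g xb)) := hfr.add hrk
      have hco := EReal.tendsto_coe.mpr hreal
      rw [hxbeq, ← EReal.coe_add]
      refine hco.congr' ?_
      filter_upwards [hφtop.eventually_ge_atTop 2] with k hk2
      rw [hfeq (φ k) hk2, ← EReal.coe_add]
  · -- part 2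
    have hmem : ∀ n, x n ∈ Metric.closedBall (0 : EuclideanSpace ℝ (Fin m)) R := by
      intro n; rw [Metric.mem_closedBall, dist_zero_right]; exact hR n
    obtain ⟨a, _, φ, hφ, hconv⟩ := (isCompact_closedBall (0 : EuclideanSpace ℝ (Fin m)) R).tendsto_subseq hmem
    exact ⟨φ, a, hφ, hconv⟩
end
end
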